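/- Let {P_n : n ∈ ℕ} be a partition of ℕ into infinite sets and for each n let I_n be a maximal ideal on P_n. Then I = {A ⊆ ℕ : A ∩ P_n ∈ I_n for all but finitely many n} is an ideal on ℕ, and there exists an I-almost-disjoint family of cardinality continuum. -/

import Mathlib

open Set Filter
open scoped Classical

/-- The shift of a set of naturals by an integer `k`, i.e. `(A + k) ∩ ℕ`. -/
def shiftSet (A : Set ℕ) (k : ℤ) : Set ℕ := {n : ℕ | ∃ a ∈ A, (a : ℤ) + k = (n : ℤ)}

/-- An ideal on ℕ. -/
def IsIdeal (I : Set (Set ℕ)) : Prop :=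
  (∀ A B : Set ℕ, A ∈ I → B ∈ I → A ∪ B ∈ I) ∧
  (∀ A B : Set ℕ, A ⊆ B → B ∈ I → A ∈ I) ∧
  (∀ A : Set ℕ, A.Finite → A ∈ I) ∧
  (Set.univ : Set ℕ) ∉ I

/-- A translation invariant ideal on ℕ. -/
def TransInvIdeal (I : Set (Set ℕ)) : Prop :=
  IsIdeal I ∧ ∀ A ∈ I, ∀ k : ℤ, shiftSet A k ∈ I

/-- An abstract upper density on ℕ. -/
def IsAUD (δ : Set ℕ → ℝ) : Prop :=
  (∀ A : Set ℕ, 0 ≤ δ A ∧ δ A ≤ 1) ∧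
  δ Set.univ = 1 ∧
  (∀ A : Set ℕ, A.Finite → δ A = 0) ∧
  (∀ A B : Set ℕ, A ⊆ B → δ A ≤ δ B) ∧
  (∀ A B : Set ℕ, δ (A ∪ B) ≤ δ A + δ B)

/-- A translation invariant density. -/
def TransInvAUD (δ : Set ℕ → ℝ) : Prop := ∀ (A : Set ℕ) (k : ℤ), δ (shiftSet A k) = δ A

/-- A rich density: onto [0,1]. -/
def Rich (δ : Set ℕ → ℝ) : Prop := ∀ r ∈ Set.Icc (0:ℝ) 1, ∃ A : Set ℕ, δ A = r

/-- The family of null sets of a density. -/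
def ZSet (δ : Set ℕ → ℝ) : Set (Set ℕ) := {A | δ A = 0}

/-- An `I`-almost disjoint family. -/
def IsADFamily (I : Set (Set ℕ)) (𝒜 : Set (Set ℕ)) : Prop :=
  (∀ A ∈ 𝒜, A ∉ I) ∧ ∀ A ∈ 𝒜, ∀ B ∈ 𝒜, A ≠ B → A ∩ B ∈ I

/-- An `I`-translation almost disjoint family. -/
def IsTADFamily (I : Set (Set ℕ)) (𝒜 : Set (Set ℕ)) : Prop :=
  (∀ A ∈ 𝒜, A ∉ I) ∧ ∀ A ∈ 𝒜, ∀ B ∈ 𝒜, A ≠ B → ∀ k : ℤ, A ∩ shiftSet B k ∈ I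

/-- A maximal ideal on ℕ. -/
def MaximalIdeal (I : Set (Set ℕ)) : Prop :=
  IsIdeal I ∧ ∀ J : Set (Set ℕ), IsIdeal J → I ⊆ J → I = J

/-- An ideal on a subset `X` of ℕ. -/
def IsIdealOn (X : Set ℕ) (I : Set (Set ℕ)) : Prop :=
  (∀ A ∈ I, A ⊆ X) ∧
  (∀ A B : Set ℕ, A ∈ I → B ∈ I → A ∪ B ∈ I) ∧
  (∀ A B : Set ℕ, A ⊆ B → B ∈ I → A ∈ I) ∧
  (∀ A : Set ℕ, A ⊆ X → A.Finite → A ∈ I) ∧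
  X ∉ I

/-- A maximal ideal on a subset `X` of ℕ. -/
def MaximalIdealOn (X : Set ℕ) (I : Set (Set ℕ)) : Prop :=
  IsIdealOn X I ∧ ∀ A : Set ℕ, A ⊆ X → (A ∈ I ∨ X \ A ∈ I)

/-- The translation-invariant kernel of an ideal. -/
def tIdeal (I : Set (Set ℕ)) : Set (Set ℕ) := {A | ∀ k : ℤ, shiftSet A k ∈ I}

/-- A T-maximal ideal: maximal among translation invariant ideals. -/
def TMaximalIdeal (I : Set (Set ℕ)) : Prop :=
  TransInvIdeal I ∧ ∀ J : Set (Set ℕ), TransInvIdeal J → I ⊆ J → I = J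

/-- Code of the length-`n` prefix of `f`. -/
noncomputable def preCode (f : ℕ → Bool) (n : ℕ) : ℕ :=
  Encodable.encode (List.ofFn fun i : Fin n => f i)

lemma preCode_eq {f g : ℕ → Bool} {n m : ℕ} (h : preCode f n = preCode g m) :
    n = m ∧ ∀ i < n, f i = g i := by
  have hl : (List.ofFn fun i : Fin n => f i) = (List.ofFn fun i : Fin m => g i) :=
    Encodable.encode_injective h
  have hnm : n = m := by
    have := congrArg List.length hl
    simpa using this
  subst hnm
  refine ⟨rfl, fun i hi => ?_⟩
  have := congrArg (fun l => l[i]?) hl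
  simpa [List.getElem?_ofFn, hi] using this

lemma preCode_inj (f : ℕ → Bool) : Function.Injective (preCode f) :=
  fun n m h => (preCode_eq h).1

/-- The branch set. -/
noncomputable def branch (f : ℕ → Bool) : Set ℕ := Set.range (preCode f)

lemma branch_infinite (f : ℕ → Bool) : (branch f).Infinite :=
  Set.infinite_range_of_injective (preCode_inj f)

lemma branch_inter_finite {f g : ℕ → Bool} (hfg : f ≠ g) :
    (branch f ∩ branch g).Finite := by
  obtain ⟨N, hN⟩ : ∃ N, f N ≠ g N := by
    by_contra h; push_neg at h; exact hfg (funext h)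
  apply Set.Finite.subset ((Set.finite_Iic N).image (preCode f))
  rintro x ⟨⟨n, rfl⟩, ⟨m, hm⟩⟩
  obtain ⟨hnm, hag⟩ := preCode_eq hm.symm
  refine ⟨n, ?_, rfl⟩
  simp only [Set.mem_Iic]
  by_contra hn
  exact hN (hag N (by omega))

lemma branch_inj : Function.Injective branch := by
  intro f g h
  funext n
  have h1 : preCode f (n+1) ∈ branch g := h ▸ ⟨n+1, rfl⟩
  obtain ⟨m, hm⟩ := h1
  obtain ⟨hnm, hag⟩ := preCode_eq hm.symm
  exact hag n (by omega)

theorem stmt7 (P : ℕ → Set ℕ)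
    (hdisj : Pairwise (Function.onFun Disjoint P))
    (hcover : (⋃ n, P n) = Set.univ)
    (hinf : ∀ n, (P n).Infinite)
    (In : ℕ → Set (Set ℕ)) (hIn : ∀ n, MaximalIdealOn (P n) (In n)) :
    IsIdeal {A : Set ℕ | {n : ℕ | A ∩ P n ∉ In n}.Finite} ∧
    ∃ 𝒜 : Set (Set ℕ), IsADFamily {A : Set ℕ | {n : ℕ | A ∩ P n ∉ In n}.Finite} 𝒜 ∧
      Cardinal.mk 𝒜 = Cardinal.continuum := by
  set I : Set (Set ℕ) := {A : Set ℕ | {n : ℕ | A ∩ P n ∉ In n}.Finite} with hI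
  have hPmem : ∀ n, P n ∉ In n := fun n => (hIn n).1.2.2.2.2
  have hempty : ∀ n, (∅ : Set ℕ) ∈ In n := fun n =>
    (hIn n).1.2.2.2.1 ∅ (Set.empty_subset _) Set.finite_empty
  have hdown : ∀ n, ∀ A B : Set ℕ, A ⊆ B → B ∈ In n → A ∈ In n := fun n => (hIn n).1.2.2.1
  have hunion : ∀ n, ∀ A B : Set ℕ, A ∈ In n → B ∈ In n → A ∪ B ∈ In n := fun n => (hIn n).1.2.1
  have hideal : IsIdeal I := by
    refine ⟨?_, ?_, ?_, ?_⟩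
    · intro A B hA hB
      refine Set.Finite.subset (hA.union hB) ?_
      intro n hn
      simp only [Set.mem_setOf_eq, Set.mem_union] at *
      by_contra hc
      push_neg at hc
      exact hn (by rw [Set.union_inter_distrib_right]; exact hunion n _ _ hc.1 hc.2)
    · intro A B hAB hB
      refine Set.Finite.subset hB ?_
      intro n hn
      simp only [Set.mem_setOf_eq] at *
      exact fun hc => hn (hdown n _ _ (Set.inter_subset_inter_left _ hAB) hc)
    · intro A hA
      show {n : ℕ | A ∩ P n ∉ In n}.Finite
      have : {n : ℕ | A ∩ P n ∉ In n} = ∅ := by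
        ext n
        simp only [Set.mem_setOf_eq, Set.mem_empty_iff_false, iff_false, not_not]
        exact (hIn n).1.2.2.2.1 _ Set.inter_subset_right (hA.subset Set.inter_subset_left)
      rw [this]; exact Set.finite_empty
    · intro hc
      simp only [hI, Set.mem_setOf_eq, Set.univ_inter] at hc
      have : {n : ℕ | P n ∉ In n} = Set.univ := Set.eq_univ_of_forall hPmem
      rw [this] at hc
      exact Set.infinite_univ hc
  refine ⟨hideal, ?_⟩
  -- The map from index sets to unions of blocks
  set U : Set ℕ → Set ℕ := fun S => ⋃ m ∈ S, P m with hU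
  have hUP : ∀ (S : Set ℕ) (n : ℕ), U S ∩ P n = if n ∈ S then P n else ∅ := by
    intro S n
    ext x
    simp only [hU, Set.mem_inter_iff, Set.mem_iUnion₂]
    constructor
    · rintro ⟨⟨m, hmS, hxm⟩, hxn⟩
      have hmn : m = n := by
        by_contra h
        exact (hdisj h).le_bot ⟨hxm, hxn⟩ 
      subst hmn
      rw [if_pos hmS]
      exact hxn
    · intro hx
      split_ifs at hx with h
      · exact ⟨⟨n, h, hx⟩, hx⟩
      · exact absurd hx (Set.notMem_empty x)
  have hbad : ∀ S : Set ℕ, {n : ℕ | U S ∩ P n ∉ In n} = S := by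
    intro S
    ext n
    simp only [Set.mem_setOf_eq, hUP S n]
    by_cases h : n ∈ S <;> simp [h, hPmem n, hempty n]
  have hUinj : Function.Injective U := by
    intro S T h
    have := congrArg (fun A => {n : ℕ | A ∩ P n ∉ In n}) h
    simpa [hbad] using this
  have hUinter : ∀ S T : Set ℕ, U S ∩ U T = U (S ∩ T) := by
    intro S T
    ext x
    constructor
    · rintro ⟨hS, hT⟩
      simp only [hU, Set.mem_iUnion₂] at hS hT ⊢
      obtain ⟨m, hm, hxm⟩ := hS
      obtain ⟨k, hk, hxk⟩ := hT
      have : m = k := by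
        by_contra h
        exact (hdisj h).le_bot ⟨hxm, hxk⟩
      subst this
      exact ⟨m, ⟨hm, hk⟩, hxm⟩
    · intro hx
      simp only [hU, Set.mem_iUnion₂] at hx
      obtain ⟨m, ⟨h1, h2⟩, hxm⟩ := hx
      exact ⟨Set.mem_biUnion h1 hxm, Set.mem_biUnion h2 hxm⟩
  -- the family
  refine ⟨Set.range (fun f : ℕ → Bool => U (branch f)), ⟨?_, ?_⟩, ?_⟩
  · rintro A ⟨f, rfl⟩
    simp only [hI, Set.mem_setOf_eq, hbad]
    exact branch_infinite f
  · rintro A ⟨f, rfl⟩ B ⟨g, rfl⟩ hAB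
    have hfg : f ≠ g := fun h => hAB (by rw [h])
    simp only [hI, Set.mem_setOf_eq, hUinter, hbad]
    exact branch_inter_finite hfg
  · have hinj : Function.Injective (fun f : ℕ → Bool => U (branch f)) :=
      fun f g h => branch_inj (hUinj h)
    rw [Cardinal.mk_range_eq _ hinj]
    rw [Cardinal.mk_arrow]
    simp [Cardinal.two_power_aleph0]
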